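/- Let Ĝ be a split semisimple group of rank ≥ 1 with maximal torus T̂, character lattice X = X*(T̂), simple roots Δ, Weyl group W, and let 2ρ∨ be the sum of the positive coroots. Write Q_pos ⊆ X for the submonoid generated by the simple roots, and P⁺_pos ⊆ X for the submonoid generated by the dominant weights together with the simple roots. For λ ∈ X let λ₋ denote the unique antidominant element of the orbit Wλ. Then for every λ ∈ X and n ∈ ℤ the following are equivalent: (i) there exists μ ∈ P⁺_pos with ⟨μ, 2ρ∨⟩ = n and μ + λ₋ ∈ Q_pos; (ii) ⟨λ, 2ρ∨⟩ ≡ n (mod 2) and ⟨λ₋, 2ρ∨⟩ ≥ −n. -/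

import Mathlib

private lemma qpos_deg {X : Type*} [AddCommGroup X]
    (Δ : Finset X) (deg : X →+ ℤ) (hdeg : ∀ a ∈ Δ, deg a = 2)
    {x : X} (hx : x ∈ AddSubmonoid.closure (Δ : Set X)) :
    2 ∣ deg x ∧ 0 ≤ deg x := by
  induction hx using AddSubmonoid.closure_induction with
  | mem a ha => simp [hdeg a ha]
  | zero => simp
  | add a b _ _ iha ihb =>
    rw [map_add]
    exact ⟨dvd_add iha.1 ihb.1, add_nonneg iha.2 ihb.2⟩

private lemma qlat_deg {X : Type*} [AddCommGroup X]
    (Δ : Finset X) (deg : X →+ ℤ) (hdeg : ∀ a ∈ Δ, deg a = 2)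
    {x : X} (hx : x ∈ AddSubgroup.closure (Δ : Set X)) :
    2 ∣ deg x := by
  induction hx using AddSubgroup.closure_induction with
  | mem a ha => simp [hdeg a ha]
  | zero => simp
  | add a b _ _ iha ihb => rw [map_add]; exact dvd_add iha ihb
  | neg a _ iha => rw [map_neg]; exact iha.neg_right

/-- Root-datum combinatorics for the Vinberg monoid. -/
theorem vinberg_weight_condition
    {X : Type*} [AddCommGroup X]
    (Δ : Finset X) (hΔ : Δ.Nonempty)
    (deg : X →+ ℤ) (hdeg : ∀ a ∈ Δ, deg a = 2)
    (Dom : Set X) (hDom : ∀ x ∈ Dom, 0 ≤ deg x)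
    (lam lamminus : X)
    (hanti : -lamminus ∈ Dom)
    (hdiff : lam - lamminus ∈ AddSubgroup.closure (Δ : Set X))
    (n : ℤ) :
    (∃ μ ∈ AddSubmonoid.closure (Dom ∪ (Δ : Set X)),
        deg μ = n ∧ μ + lamminus ∈ AddSubmonoid.closure (Δ : Set X)) ↔
      (deg lam ≡ n [ZMOD 2] ∧ -n ≤ deg lamminus) := by
  have hll : (2:ℤ) ∣ deg lam - deg lamminus := by
    have := qlat_deg Δ deg hdeg hdiff
    rwa [map_sub] at this
  constructor
  · rintro ⟨μ, -, hdn, hq⟩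
    obtain ⟨hdvd, hpos⟩ := qpos_deg Δ deg hdeg hq
    rw [map_add, hdn] at hdvd hpos
    constructor
    · rw [Int.modEq_iff_dvd]
      omega
    · linarith
  · rintro ⟨hmod, hge⟩
    obtain ⟨a, ha⟩ := hΔ
    have h2 : (2 : ℤ) ∣ n + deg lamminus := by
      rw [Int.modEq_iff_dvd] at hmod
      omega
    obtain ⟨k, hk⟩ := h2
    have hk0 : 0 ≤ k := by omega
    refine ⟨-lamminus + k.toNat • a, ?_, ?_, ?_⟩
    · refine AddSubmonoid.add_mem _ (AddSubmonoid.subset_closure (Or.inl hanti)) ?_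
      have haa : a ∈ AddSubmonoid.closure (Dom ∪ (Δ : Set X)) :=
        AddSubmonoid.subset_closure (Or.inr (Finset.mem_coe.mpr ha))
      exact nsmul_mem haa _
    · have : deg (k.toNat • a) = 2 * k := by
        rw [map_nsmul, hdeg a ha]; simp [Int.toNat_of_nonneg hk0]; ring
      rw [map_add, map_neg, this]; linarith [hk]
    · have : -lamminus + k.toNat • a + lamminus = k.toNat • a := by abel
      rw [this]
      have haa : a ∈ AddSubmonoid.closure (Δ : Set X) :=
        AddSubmonoid.subset_closure (Finset.mem_coe.mpr ha)
      exact nsmul_mem haa _
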